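/- Let X be a type, let e be a permutation of X, and let m ≥ 1 be an integer with e^m = id. Let σ denote the induced automorphism of the free abelian group ℤ[X] of finitely supported functions X → ℤ, given by permuting the basis, (σγ)(x) = γ(e⁻¹(x)). If γ ∈ ℤ[X] satisfies σ⁰(γ) + σ¹(γ) + ⋯ + σ^{m−1}(γ) = 0, then there exists δ ∈ ℤ[X] with γ = σ(δ) − δ. -/

import Mathlib

open Finsupp Function Finset

private lemma emd_add {X : Type*} (f : Equiv.Perm X) (a b : X →₀ ℤ) :
    Finsupp.equivMapDomain f (a + b)
      = Finsupp.equivMapDomain f a + Finsupp.equivMapDomain f b := by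
  ext y; simp [Finsupp.equivMapDomain_apply]

private lemma emd_sub {X : Type*} (f : Equiv.Perm X) (a b : X →₀ ℤ) :
    Finsupp.equivMapDomain f (a - b)
      = Finsupp.equivMapDomain f a - Finsupp.equivMapDomain f b := by
  ext y; simp [Finsupp.equivMapDomain_apply]

private lemma emd_comp {X : Type*} (f g : Equiv.Perm X) (a : X →₀ ℤ) :
    Finsupp.equivMapDomain f (Finsupp.equivMapDomain g a)
      = Finsupp.equivMapDomain (f * g) a := by
  ext y; simp [Finsupp.equivMapDomain_apply]; rfl

private lemma periodic_sum {g : ℕ → ℤ} {d : ℕ} (hg : ∀ k, g (k + d) = g k) (c : ℕ) :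
    ∑ i ∈ Finset.range (c * d), g i = c * ∑ k ∈ Finset.range d, g k := by
  induction c with
  | zero => simp
  | succ c ih =>
    have hshift : ∀ c k, g (c * d + k) = g k := by
      intro c
      induction c with
      | zero => simp
      | succ c ih2 =>
        intro k
        have : (c+1) * d + k = (c * d + k) + d := by ring
        rw [this, hg, ih2]
    rw [add_mul, one_mul, Finset.sum_range_add]
    simp only [hshift, ih]
    push_cast
    ring

private lemma orbit_sum_zero {X : Type*} (e : Equiv.Perm X) (m : ℕ) (hm : 1 ≤ m)
    (he : e ^ m = 1) (γ : X →₀ ℤ)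
    (hsum : ∑ i ∈ Finset.range m, Finsupp.equivMapDomain (e ^ i) γ = 0) (x : X) :
    ∑ k ∈ Finset.range (Function.minimalPeriod (⇑e) x), γ ((⇑e)^[k] x) = 0 := by
  have hpm : (⇑e)^[m] x = x := by
    rw [Equiv.Perm.iterate_eq_pow, he]; rfl
  have hper : Function.IsPeriodicPt (⇑e) m x := hpm
  set d := Function.minimalPeriod (⇑e) x with hdd
  have hd : d ∣ m := hper.minimalPeriod_dvd
  have hd0 : 0 < d := hper.minimalPeriod_pos hm
  set g : ℕ → ℤ := fun k => γ ((⇑e)^[k] x) with hgdef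
  have hdx : (⇑e)^[d] x = x := Function.iterate_minimalPeriod
  have hgper : ∀ k, g (k + d) = g k := by
    intro k
    simp only [hgdef, Function.iterate_add_apply, hdx]
  -- pointwise consequence of hsum
  have h1 : ∑ i ∈ Finset.range m, γ ((e ^ i).symm x) = 0 := by
    have := DFunLike.congr_fun hsum x
    rwa [Finsupp.finset_sum_apply] at this
  have h2 : ∀ i ∈ Finset.range m, γ ((e ^ i).symm x) = g (m - i) := by
    intro i hi
    have : (e ^ i).symm x = (⇑e)^[m - i] x := by
      rw [Equiv.symm_apply_eq]
      have : (e ^ i) ((⇑e)^[m - i] x) = (⇑e)^[i + (m - i)] x := by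
        rw [Function.iterate_add_apply]; rfl
      rw [this, Nat.add_sub_cancel' (le_of_lt (Finset.mem_range.mp hi)), hpm]
    rw [this]
  rw [Finset.sum_congr rfl h2] at h1
  -- reflect the sum
  have h3 : ∑ i ∈ Finset.range m, g (m - i) = ∑ i ∈ Finset.range m, g i := by
    have hr := Finset.sum_range_reflect (fun j => g (j + 1)) m
    have hl : ∀ i ∈ Finset.range m, g (m - 1 - i + 1) = g (m - i) := by
      intro i hi
      have := Finset.mem_range.mp hi
      congr 1
      omega
    rw [Finset.sum_congr rfl hl] at hr
    have e1 := Finset.sum_range_succ' g m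
    have e2 := Finset.sum_range_succ g m
    have hg0 : g m = g 0 := by simp only [hgdef]; rw [hpm]; rfl
    rw [hr]
    omega
  rw [h3] at h1
  obtain ⟨c, hc⟩ := hd
  have hc0 : c ≠ 0 := by rintro rfl; omega
  rw [hc, mul_comm, periodic_sum hgper c] at h1
  rcases mul_eq_zero.mp h1 with h | h
  · exact absurd (by exact_mod_cast h) hc0
  · exact h

private lemma emd_one {X : Type*} (a : X →₀ ℤ) :
    Finsupp.equivMapDomain (1 : Equiv.Perm X) a = a := by
  ext y; simp [Finsupp.equivMapDomain_apply]; rfl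

private lemma key {X : Type*} (e : Equiv.Perm X) (m : ℕ) (hm : 1 ≤ m) (he : e ^ m = 1) :
    ∀ n (γ : X →₀ ℤ), γ.support.card ≤ n →
      (∑ i ∈ Finset.range m, Finsupp.equivMapDomain (e ^ i) γ = 0) →
      ∃ δ : X →₀ ℤ, γ = Finsupp.equivMapDomain e δ - δ := by
  intro n
  induction n with
  | zero =>
    intro γ hcard _
    have : γ = 0 := by
      rw [← Finsupp.support_eq_empty]
      exact Finset.card_eq_zero.mp (Nat.le_zero.mp hcard)
    exact ⟨0, by simp [this, emd_one]⟩
  | succ n ih =>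
    classical
    intro γ hcard hsum
    by_cases hγ : γ = 0
    · exact ⟨0, by simp [hγ, emd_one]⟩
    obtain ⟨x, hx⟩ := Finsupp.support_nonempty_iff.mpr hγ
    have hpm : (⇑e)^[m] x = x := by rw [Equiv.Perm.iterate_eq_pow, he]; rfl
    have hper : Function.IsPeriodicPt (⇑e) m x := hpm
    set d := Function.minimalPeriod (⇑e) x with hdd
    have hd0 : 0 < d := hper.minimalPeriod_pos hm
    have hdx : (⇑e)^[d] x = x := Function.iterate_minimalPeriod
    set c : ℕ → ℤ := fun k => -∑ j ∈ Finset.range k, γ ((⇑e)^[j + 1] x) with hcdef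
    set δx : X →₀ ℤ := ∑ k ∈ Finset.range d, Finsupp.single ((⇑e)^[k] x) (c k) with hδxdef
    -- evaluation of δx on the orbit
    have hδx_orb : ∀ j < d, δx ((⇑e)^[j] x) = c j := by
      intro j hj
      rw [hδxdef, Finsupp.finset_sum_apply]
      rw [Finset.sum_eq_single j]
      · simp
      · intro k hk hkj
        rw [Finsupp.single_apply, if_neg]
        exact fun hkeq => hkj
          (Function.iterate_injOn_Iio_minimalPeriod (Set.mem_Iio.mpr (Finset.mem_range.mp hk))
            (Set.mem_Iio.mpr hj) hkeq)
      · intro hj'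
        exact absurd (Finset.mem_range.mpr hj) hj'
    -- evaluation of δx off the orbit
    have hδx_off : ∀ y, (∀ k < d, (⇑e)^[k] x ≠ y) → δx y = 0 := by
      intro y hy
      rw [hδxdef, Finsupp.finset_sum_apply]
      apply Finset.sum_eq_zero
      intro k hk
      rw [Finsupp.single_apply, if_neg (hy k (Finset.mem_range.mp hk))]
    set ρ : X →₀ ℤ := Finsupp.equivMapDomain e δx - δx with hρdef
    have hρ_apply : ∀ y, ρ y = δx (e.symm y) - δx y := by
      intro y
      rw [hρdef, Finsupp.sub_apply, Finsupp.equivMapDomain_apply]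
    -- ρ agrees with γ on the orbit
    have hρ_orb : ∀ j < d, ρ ((⇑e)^[j] x) = γ ((⇑e)^[j] x) := by
      intro j hj
      rw [hρ_apply]
      cases j with
      | zero =>
        have hsymm : e.symm x = (⇑e)^[d - 1] x := by
          rw [Equiv.symm_apply_eq]
          have : e ((⇑e)^[d - 1] x) = (⇑e)^[d - 1 + 1] x := (Function.iterate_succ_apply' _ _ _).symm
          
          rw [this, Nat.sub_add_cancel hd0, hdx]
        have h00 := hδx_orb 0 hd0
        simp only [Function.iterate_zero_apply] at h00 ⊢
        rw [hsymm, hδx_orb (d - 1) (by omega), h00]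
        have horb := orbit_sum_zero e m hm he γ hsum x
        rw [← hdd] at horb
        have hd' : d = (d - 1) + 1 := by omega
        rw [hd', Finset.sum_range_succ' (fun k => γ ((⇑e)^[k] x)) (d - 1)] at horb
        simp only [hcdef, Function.iterate_zero_apply, Finset.range_zero,
          Finset.sum_empty, neg_zero, sub_zero] at horb ⊢
        linarith
      | succ j =>
        have hsymm : e.symm ((⇑e)^[j + 1] x) = (⇑e)^[j] x := by
          rw [Equiv.symm_apply_eq]
          exact Function.iterate_succ_apply' _ _ _
        rw [hsymm, hδx_orb j (by omega), hδx_orb (j + 1) hj]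
        simp only [hcdef]
        rw [Finset.sum_range_succ]
        ring
    -- ρ vanishes off the orbit
    have hρ_off : ∀ y, (∀ k < d, (⇑e)^[k] x ≠ y) → ρ y = 0 := by
      intro y hy
      rw [hρ_apply, hδx_off y hy, hδx_off (e.symm y), sub_zero]
      intro k hk hkeq
      have : (⇑e)^[k + 1] x = y := by
        rw [Function.iterate_succ_apply', hkeq, Equiv.apply_symm_apply]
      have hmod : (⇑e)^[(k + 1) % d] x = y := by
        rw [hdd, Function.iterate_mod_minimalPeriod_eq]; exact this
      exact hy ((k + 1) % d) (Nat.mod_lt _ hd0) hmod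
    set γ' : X →₀ ℤ := γ - ρ with hγ'def
    have hsupp : γ'.support ⊆ γ.support.erase x := by
      intro y hy
      have hy' : γ' y ≠ 0 := Finsupp.mem_support_iff.mp hy
      by_cases horb : ∃ k < d, (⇑e)^[k] x = y
      · obtain ⟨k, hk, rfl⟩ := horb
        exact absurd (by rw [hγ'def, Finsupp.sub_apply, hρ_orb k hk, sub_self]) hy'
      · push_neg at horb
        have hρy : ρ y = 0 := hρ_off y horb
        have hγy : γ' y = γ y := by rw [hγ'def, Finsupp.sub_apply, hρy, sub_zero]
        refine Finset.mem_erase.mpr ⟨?_, Finsupp.mem_support_iff.mpr (hγy ▸ hy')⟩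
        rintro rfl
        exact horb 0 hd0 rfl
    have hcard' : γ'.support.card ≤ n := by
      have h1 := Finset.card_le_card hsupp
      rw [Finset.card_erase_of_mem hx] at h1
      omega
    have hsum' : ∑ i ∈ Finset.range m, Finsupp.equivMapDomain (e ^ i) γ' = 0 := by
      have hρsum : ∑ i ∈ Finset.range m, Finsupp.equivMapDomain (e ^ i) ρ = 0 := by
        simp only [hρdef, emd_sub, Finset.sum_sub_distrib]
        set f : ℕ → (X →₀ ℤ) := fun i => Finsupp.equivMapDomain (e ^ i) δx with hfdef
        have hstep : ∀ i, Finsupp.equivMapDomain (e ^ i) (Finsupp.equivMapDomain e δx)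
            = f (i + 1) := by
          intro i
          rw [emd_comp, hfdef]
          congr 1
          rw [pow_succ]
        simp only [hstep]
        have hshift : ∑ i ∈ Finset.range m, f (i + 1) = ∑ i ∈ Finset.range m, f i := by
          have e1 := Finset.sum_range_succ' f m
          have e2 := Finset.sum_range_succ f m
          have hf0 : f m = f 0 := by simp only [hfdef, he, pow_zero]
          rw [hf0] at e2
          exact add_right_cancel (e1.symm.trans e2)
        rw [hshift, sub_self]
      rw [hγ'def]
      simp only [emd_sub, Finset.sum_sub_distrib, hsum, hρsum, sub_zero]
    obtain ⟨δ', hδ'⟩ := ih γ' hcard' hsum'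
    refine ⟨δ' + δx, ?_⟩
    have : γ = γ' + ρ := by rw [hγ'def]; abel
    rw [this, hδ', hρdef, emd_add]
    abel

/-- Let `e` be a permutation of `X` with `e ^ m = 1` for some `m ≥ 1`, and let `σ` be the
induced automorphism of the free abelian group `ℤ[X] = X →₀ ℤ` permuting the basis,
`(σ γ)(x) = γ(e⁻¹ x)`, i.e. `σ = Finsupp.equivMapDomain e`.  If
`σ⁰(γ) + σ¹(γ) + ⋯ + σ^{m−1}(γ) = 0` then `γ = σ(δ) − δ` for some `δ`. -/
theorem statement4 {X : Type*} (e : Equiv.Perm X) (m : ℕ) (hm : 1 ≤ m)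
    (he : e ^ m = 1) (γ : X →₀ ℤ)
    (hsum : ∑ i ∈ Finset.range m, Finsupp.equivMapDomain (e ^ i) γ = 0) :
    ∃ δ : X →₀ ℤ, γ = Finsupp.equivMapDomain e δ - δ :=
  key e m hm he γ.support.card γ le_rfl hsum
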